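/- Suppose X* ∈ F_{n,k} is an optimal solution of min_{X∈F_{n,k}} f(X) satisfying the eigen-gap assumption with parameter δ > 0, and let η > 0. Then for any X ∈ F_{n,k} with ‖X − X*‖_F ≤ ηδ/(2(1+ηβ)), it holds that rank(Π_{F_{n,k}}[X − η∇f(X)]) = k. -/

import Mathlib

open Matrix

noncomputable def frobNorm {m : ℕ} (A : Matrix (Fin m) (Fin m) ℝ) : ℝ :=
  Real.sqrt (∑ i, ∑ j, (A i j) ^ 2)

/-- `eigval A j` is the `j`-th largest eigenvalue (1-indexed) of the symmetric matrix `A`. -/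
noncomputable def eigval {m : ℕ} (A : Matrix (Fin m) (Fin m) ℝ) (j : ℕ) : ℝ :=
  if h : A.IsHermitian then
    if hj : m - j < m then (h.eigenvalues ∘ Tuple.sort h.eigenvalues) ⟨m - j, hj⟩ else 0
  else 0

/-- spectral norm: largest singular value. -/
noncomputable def specNorm {m : ℕ} (A : Matrix (Fin m) (Fin m) ℝ) : ℝ :=
  Real.sqrt (eigval (Aᵀ * A) 1)

/-- `P_{n,k}`: rank-`k` orthogonal projection matrices. -/
def ProjSet (n k : ℕ) : Set (Matrix (Fin n) (Fin n) ℝ) :=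
  {X | ∃ Q : Matrix (Fin n) (Fin k) ℝ, Qᵀ * Q = 1 ∧ X = Q * Qᵀ}

/-- The Fantope `F_{n,k}`. -/
def Fantope (n k : ℕ) : Set (Matrix (Fin n) (Fin n) ℝ) :=
  {X | X.IsSymm ∧ X.PosSemidef ∧ (1 - X).PosSemidef ∧ X.trace = (k : ℝ)}

namespace StmtAux
variable {n : ℕ}

/-- Frobenius inner product. -/
def fip (A B : Matrix (Fin n) (Fin n) ℝ) : ℝ := ∑ i, ∑ j, A i j * B i j

lemma fip_comm (A B : Matrix (Fin n) (Fin n) ℝ) : fip A B = fip B A := by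
  simp [fip, mul_comm]

lemma fip_self_nonneg (A : Matrix (Fin n) (Fin n) ℝ) : 0 ≤ fip A A := by
  apply Finset.sum_nonneg; intro i _; apply Finset.sum_nonneg; intro j _; exact mul_self_nonneg _

lemma frobNorm_eq (A : Matrix (Fin n) (Fin n) ℝ) : frobNorm A = Real.sqrt (fip A A) := by
  simp [frobNorm, fip, sq]

lemma frobNorm_nonneg (A : Matrix (Fin n) (Fin n) ℝ) : 0 ≤ frobNorm A := Real.sqrt_nonneg _

lemma frobNorm_sq (A : Matrix (Fin n) (Fin n) ℝ) : frobNorm A ^ 2 = fip A A := by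
  rw [frobNorm_eq, Real.sq_sqrt (fip_self_nonneg A)]

lemma fip_trace (A B : Matrix (Fin n) (Fin n) ℝ) : fip A B = (Aᵀ * B).trace := by
  unfold fip Matrix.trace Matrix.diag
  simp only [Matrix.mul_apply, Matrix.transpose_apply]
  rw [Finset.sum_comm]

lemma trace_eq_fip {A : Matrix (Fin n) (Fin n) ℝ} (hA : A.IsSymm) (B : Matrix (Fin n) (Fin n) ℝ) :
    (A * B).trace = fip A B := by
  rw [fip_trace, hA.eq]

lemma fip_add_left (A B C : Matrix (Fin n) (Fin n) ℝ) :
    fip (A + B) C = fip A C + fip B C := by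
  simp [fip, add_mul, Finset.sum_add_distrib]

lemma fip_add_right (A B C : Matrix (Fin n) (Fin n) ℝ) :
    fip A (B + C) = fip A B + fip A C := by
  simp [fip, mul_add, Finset.sum_add_distrib]

lemma fip_sub_left (A B C : Matrix (Fin n) (Fin n) ℝ) :
    fip (A - B) C = fip A C - fip B C := by
  simp [fip, sub_mul, Finset.sum_sub_distrib]

lemma fip_sub_right (A B C : Matrix (Fin n) (Fin n) ℝ) :
    fip A (B - C) = fip A B - fip A C := by
  simp [fip, mul_sub, Finset.sum_sub_distrib]

lemma fip_smul_left (c : ℝ) (A B : Matrix (Fin n) (Fin n) ℝ) :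
    fip (c • A) B = c * fip A B := by
  simp [fip, Finset.mul_sum, mul_assoc]

lemma fip_smul_right (c : ℝ) (A B : Matrix (Fin n) (Fin n) ℝ) :
    fip A (c • B) = c * fip A B := by
  rw [fip_comm, fip_smul_left, fip_comm]

lemma fip_neg_left (A B : Matrix (Fin n) (Fin n) ℝ) : fip (-A) B = - fip A B := by
  simp [fip, Finset.sum_neg_distrib]

lemma frobNorm_neg (A : Matrix (Fin n) (Fin n) ℝ) : frobNorm (-A) = frobNorm A := by
  simp [frobNorm]

/-- Cauchy–Schwarz for the Frobenius inner product. -/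
lemma abs_fip_le (A B : Matrix (Fin n) (Fin n) ℝ) : |fip A B| ≤ frobNorm A * frobNorm B := by
  have h := Finset.sum_mul_sq_le_sq_mul_sq Finset.univ (fun p : Fin n × Fin n => A p.1 p.2)
    (fun p : Fin n × Fin n => B p.1 p.2)
  have h1 : (∑ p : Fin n × Fin n, A p.1 p.2 * B p.1 p.2) = fip A B := Fintype.sum_prod_type _
  have h2 : (∑ p : Fin n × Fin n, A p.1 p.2 ^ 2) = fip A A := by
    rw [fip]; rw [Fintype.sum_prod_type]; simp [sq]
  have h3 : (∑ p : Fin n × Fin n, B p.1 p.2 ^ 2) = fip B B := by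
    rw [fip]; rw [Fintype.sum_prod_type]; simp [sq]
  rw [h1, h2, h3] at h
  rw [← Real.sqrt_sq_eq_abs, frobNorm_eq, frobNorm_eq, ← Real.sqrt_mul (fip_self_nonneg A)]
  exact Real.sqrt_le_sqrt h

lemma fip_le (A B : Matrix (Fin n) (Fin n) ℝ) : fip A B ≤ frobNorm A * frobNorm B :=
  (le_abs_self _).trans (abs_fip_le A B)

lemma fip_expand_add (X Y : Matrix (Fin n) (Fin n) ℝ) :
    fip (X + Y) (X + Y) = fip X X + 2 * fip X Y + fip Y Y := by
  rw [fip_add_left, fip_add_right, fip_add_right, fip_comm Y X]; ring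

lemma frobNorm_add_le (X Y : Matrix (Fin n) (Fin n) ℝ) :
    frobNorm (X + Y) ≤ frobNorm X + frobNorm Y := by
  have key : fip (X + Y) (X + Y) ≤ (frobNorm X + frobNorm Y) ^ 2 := by
    rw [fip_expand_add]
    nlinarith [fip_le X Y, frobNorm_sq X, frobNorm_sq Y, frobNorm_nonneg X, frobNorm_nonneg Y]
  rw [frobNorm_eq]
  calc Real.sqrt (fip (X + Y) (X + Y)) ≤ Real.sqrt ((frobNorm X + frobNorm Y) ^ 2) :=
        Real.sqrt_le_sqrt key
    _ = |frobNorm X + frobNorm Y| := Real.sqrt_sq_eq_abs _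
    _ = frobNorm X + frobNorm Y :=
        abs_of_nonneg (add_nonneg (frobNorm_nonneg _) (frobNorm_nonneg _))

lemma frobNorm_sub_le (A B C : Matrix (Fin n) (Fin n) ℝ) :
    frobNorm (A - C) ≤ frobNorm (A - B) + frobNorm (B - C) := by
  have : A - C = (A - B) + (B - C) := by rw [sub_add_sub_cancel]
  rw [this]; exact frobNorm_add_le _ _

lemma frobNorm_smul (c : ℝ) (A : Matrix (Fin n) (Fin n) ℝ) :
    frobNorm (c • A) = |c| * frobNorm A := by
  rw [frobNorm_eq, frobNorm_eq]
  have : fip (c • A) (c • A) = c ^ 2 * fip A A := by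
    rw [fip_smul_left, fip_smul_right]; ring
  rw [this, Real.sqrt_mul (sq_nonneg c), Real.sqrt_sq_eq_abs]

lemma eq_of_frobNorm_sub_eq_zero {A B : Matrix (Fin n) (Fin n) ℝ}
    (h : frobNorm (A - B) = 0) : A = B := by
  have h2 : fip (A - B) (A - B) = 0 := by
    have := frobNorm_sq (A - B); rw [h] at this; simpa using this.symm
  ext i j
  by_contra hij
  have hpos : 0 < (A - B) i j * (A - B) i j := by
    have : (A - B) i j ≠ 0 := by
      intro h0; apply hij; simpa [Matrix.sub_apply, sub_eq_zero] using h0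
    exact mul_self_pos.mpr this
  have : 0 < fip (A - B) (A - B) := by
    rw [fip]
    have hnn : ∀ i', 0 ≤ ∑ j', (A - B) i' j' * (A - B) i' j' :=
      fun i' => Finset.sum_nonneg fun j' _ => mul_self_nonneg _
    have hi : 0 < ∑ j', (A - B) i j' * (A - B) i j' :=
      Finset.sum_pos' (fun j' _ => mul_self_nonneg _) ⟨j, Finset.mem_univ j, hpos⟩
    exact Finset.sum_pos' (fun i' _ => hnn i') ⟨i, Finset.mem_univ i, hi⟩
  linarith

variable {n k : ℕ}

lemma psd_smul {A : Matrix (Fin n) (Fin n) ℝ} (hA : A.PosSemidef) {c : ℝ} (hc : 0 ≤ c) :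
    (c • A).PosSemidef := by
  refine Matrix.PosSemidef.of_dotProduct_mulVec_nonneg ?_ ?_
  · show (c • A)ᴴ = c • A
    rw [Matrix.conjTranspose_smul, star_trivial, hA.1.eq]
  · intro x
    have := hA.dotProduct_mulVec_nonneg x
    simp only [Matrix.smul_mulVec, dotProduct_smul]
    exact smul_nonneg hc this

lemma psd_diag_nonneg {A : Matrix (Fin n) (Fin n) ℝ} (hA : A.PosSemidef) (i : Fin n) :
    0 ≤ A i i := by
  have := hA.dotProduct_mulVec_nonneg (Pi.single i 1)
  simpa [Matrix.mulVec_single, dotProduct, Pi.single_apply] using this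

lemma psd_col_zero {A : Matrix (Fin n) (Fin n) ℝ} (hA : A.PosSemidef) (i : Fin n)
    (h : A i i = 0) : ∀ j, A j i = 0 := by
  have hx : star (Pi.single i (1:ℝ)) ⬝ᵥ A *ᵥ Pi.single i 1 = 0 := by
    simpa [Matrix.mulVec_single, dotProduct, Pi.single_apply] using h
  have := (hA.dotProduct_mulVec_zero_iff (𝕜 := ℝ) (Pi.single i 1)).mp hx
  intro j
  have := congrFun this j
  simpa [Matrix.mulVec_single] using this

lemma psd_trace_zero {A : Matrix (Fin n) (Fin n) ℝ} (hA : A.PosSemidef)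
    (h : A.trace = 0) : A = 0 := by
  have hdiag : ∀ i, A i i = 0 := by
    have := (Finset.sum_eq_zero_iff_of_nonneg
      (fun i _ => psd_diag_nonneg hA i)).mp h
    intro i; exact this i (Finset.mem_univ i)
  ext i j
  have := psd_col_zero hA j (hdiag j) i
  simpa using this

lemma fantope_convex {X Z : Matrix (Fin n) (Fin n) ℝ} (hX : X ∈ Fantope n k)
    (hZ : Z ∈ Fantope n k) {t : ℝ} (h0 : 0 ≤ t) (h1 : t ≤ 1) :
    ((1 - t) • X + t • Z) ∈ Fantope n k := by
  obtain ⟨hXs, hXp, hXp', hXt⟩ := hX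
  obtain ⟨hZs, hZp, hZp', hZt⟩ := hZ
  refine ⟨(hXs.smul _).add (hZs.smul _), (psd_smul hXp (by linarith)).add (psd_smul hZp h0), ?_, ?_⟩
  · have key : (1:Matrix (Fin n) (Fin n) ℝ) - ((1 - t) • X + t • Z)
        = (1 - t) • (1 - X) + t • (1 - Z) := by
      rw [smul_sub, smul_sub, sub_smul, one_smul, sub_smul, one_smul]
      abel
    rw [key]
    exact ((psd_smul hXp' (by linarith)).add (psd_smul hZp' h0))
  · rw [Matrix.trace_add, Matrix.trace_smul, Matrix.trace_smul, hXt, hZt]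
    simp; ring

section conj
variable {V : Matrix (Fin n) (Fin n) ℝ}

lemma vvt (hV : Vᵀ * V = 1) : V * Vᵀ = 1 := mul_eq_one_comm.mp hV

lemma conj_symm (d : Fin n → ℝ) : (V * diagonal d * Vᵀ).IsSymm := by
  unfold Matrix.IsSymm
  rw [Matrix.transpose_mul, Matrix.transpose_mul, Matrix.transpose_transpose,
    Matrix.diagonal_transpose, Matrix.mul_assoc]

lemma conj_psd (hd : ∀ i, 0 ≤ d i) : (V * diagonal d * Vᵀ).PosSemidef := by
  have := (Matrix.PosSemidef.diagonal (R := ℝ) (d := d) hd).mul_mul_conjTranspose_same V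
  rwa [Matrix.conjTranspose_eq_transpose_of_trivial] at this

lemma trace_diagonal_mul (d : Fin n → ℝ) (M : Matrix (Fin n) (Fin n) ℝ) :
    (diagonal d * M).trace = ∑ i, d i * M i i := by
  simp [Matrix.trace, Matrix.diag, Matrix.mul_apply, Matrix.diagonal]

lemma conj_trace (hV : Vᵀ * V = 1) (d : Fin n → ℝ) :
    (V * diagonal d * Vᵀ).trace = ∑ i, d i := by
  rw [Matrix.trace_mul_cycle, hV, Matrix.one_mul]
  simp [Matrix.trace, Matrix.diag, Matrix.diagonal]

lemma conj_one (hV : Vᵀ * V = 1) : V * diagonal (fun _ => (1:ℝ)) * Vᵀ = 1 := by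
  rw [Matrix.diagonal_one, Matrix.mul_one, vvt hV]

lemma conj_sub_diag (hV : Vᵀ * V = 1) (d : Fin n → ℝ) :
    (1 : Matrix (Fin n) (Fin n) ℝ) - V * diagonal d * Vᵀ
      = V * diagonal (fun i => 1 - d i) * Vᵀ := by
  rw [← conj_one hV]
  rw [← Matrix.sub_mul, ← Matrix.mul_sub, ← Matrix.diagonal_sub]

lemma conj_mem_fantope (hV : Vᵀ * V = 1) {d : Fin n → ℝ} (hd0 : ∀ i, 0 ≤ d i)
    (hd1 : ∀ i, d i ≤ 1) (hsum : ∑ i, d i = (k:ℝ)) :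
    V * diagonal d * Vᵀ ∈ Fantope n k := by
  refine ⟨conj_symm d, conj_psd hd0, ?_, by rw [conj_trace hV]; exact hsum⟩
  rw [conj_sub_diag hV]
  exact conj_psd (fun i => by linarith [hd1 i])

lemma fantope_conj_mem (hV : Vᵀ * V = 1) {Z : Matrix (Fin n) (Fin n) ℝ}
    (hZ : Z ∈ Fantope n k) : Vᵀ * Z * V ∈ Fantope n k := by
  obtain ⟨hZs, hZp, hZp', hZt⟩ := hZ
  refine ⟨?_, ?_, ?_, ?_⟩
  · unfold Matrix.IsSymm
    rw [Matrix.transpose_mul, Matrix.transpose_mul, Matrix.transpose_transpose, hZs.eq,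
      Matrix.mul_assoc]
  · have := hZp.mul_mul_conjTranspose_same Vᵀ
    rwa [Matrix.conjTranspose_eq_transpose_of_trivial, Matrix.transpose_transpose] at this
  · have : (1:Matrix (Fin n) (Fin n) ℝ) - Vᵀ * Z * V = Vᵀ * (1 - Z) * V := by
      rw [Matrix.mul_sub, Matrix.sub_mul, Matrix.mul_one, hV]
    rw [this]
    have := hZp'.mul_mul_conjTranspose_same Vᵀ
    rwa [Matrix.conjTranspose_eq_transpose_of_trivial, Matrix.transpose_transpose] at this
  · rw [Matrix.trace_mul_cycle, vvt hV, Matrix.one_mul]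
    exact hZt

lemma conj_cancel (hV : Vᵀ * V = 1) (d : Fin n → ℝ) :
    Vᵀ * (V * diagonal d * Vᵀ) * V = diagonal d := by
  rw [← Matrix.mul_assoc, ← Matrix.mul_assoc, hV, Matrix.one_mul, Matrix.mul_assoc, hV,
    Matrix.mul_one]

end conj

-- ### Part C
variable {V : Matrix (Fin n) (Fin n) ℝ}

lemma fantope_diag_nonneg {Z : Matrix (Fin n) (Fin n) ℝ} (hZ : Z ∈ Fantope n k) (i : Fin n) :
    0 ≤ Z i i := psd_diag_nonneg hZ.2.1 i

lemma fantope_diag_le_one {Z : Matrix (Fin n) (Fin n) ℝ} (hZ : Z ∈ Fantope n k) (i : Fin n) :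
    Z i i ≤ 1 := by
  have := psd_diag_nonneg hZ.2.2.1 i
  simp only [Matrix.sub_apply, Matrix.one_apply_eq] at this
  linarith

lemma fantope_diag_sum {Z : Matrix (Fin n) (Fin n) ℝ} (hZ : Z ∈ Fantope n k) :
    ∑ i, Z i i = (k : ℝ) := hZ.2.2.2

lemma fip_conj_diag (hV : Vᵀ * V = 1) (d : Fin n → ℝ) (Z : Matrix (Fin n) (Fin n) ℝ) :
    fip (V * diagonal d * Vᵀ) Z = ∑ i, d i * (Vᵀ * Z * V) i i := by
  rw [← trace_eq_fip (conj_symm d)]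
  have e1 : V * diagonal d * Vᵀ * Z = (V * diagonal d) * (Vᵀ * Z) := by
    rw [Matrix.mul_assoc]
  rw [e1, Matrix.trace_mul_comm]
  have e2 : (Vᵀ * Z) * (V * diagonal d) = (Vᵀ * Z * V) * diagonal d := by
    rw [Matrix.mul_assoc, Matrix.mul_assoc, Matrix.mul_assoc]
  rw [e2, Matrix.trace_mul_comm, trace_diagonal_mul]

lemma fip_conj_conj (hV : Vᵀ * V = 1) (A : Matrix (Fin n) (Fin n) ℝ) :
    fip (Vᵀ * A * V) (Vᵀ * A * V) = fip A A := by
  rw [fip_trace, fip_trace]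
  simp only [Matrix.transpose_mul, Matrix.transpose_transpose, ← Matrix.mul_assoc]
  rw [Matrix.mul_assoc (Vᵀ * Aᵀ) V Vᵀ, vvt hV, Matrix.mul_one]
  rw [Matrix.trace_mul_cycle (Vᵀ * Aᵀ) A V]
  rw [← Matrix.mul_assoc V Vᵀ Aᵀ, vvt hV, Matrix.one_mul]

lemma diag_sq_le (A : Matrix (Fin n) (Fin n) ℝ) : ∑ i, A i i * A i i ≤ fip A A := by
  apply Finset.sum_le_sum
  intro i _
  exact Finset.single_le_sum (f := fun j => A i j * A i j)
    (fun j _ => mul_self_nonneg _) (Finset.mem_univ i)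

lemma scalar_lower (lam x : Fin n → ℝ) (T : Finset (Fin n)) (a b : ℝ)
    (hTa : ∀ i ∈ T, lam i ≤ a) (hTb : ∀ i ∉ T, b ≤ lam i)
    (hx0 : ∀ i, 0 ≤ x i) (hx1 : ∀ i, x i ≤ 1) (hsum : ∑ i, x i = (T.card : ℝ)) :
    ∑ i ∈ T, lam i + (b - a) * (∑ i ∈ Tᶜ, x i) ≤ ∑ i, lam i * x i := by
  have splitx : ∑ i ∈ T, x i + ∑ i ∈ Tᶜ, x i = (T.card : ℝ) := by
    rw [Finset.sum_add_sum_compl]; exact hsum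
  have splitl : ∑ i, lam i * x i = ∑ i ∈ T, lam i * x i + ∑ i ∈ Tᶜ, lam i * x i :=
    (Finset.sum_add_sum_compl T _).symm
  have hcard : ∑ i ∈ T, (1:ℝ) = (T.card : ℝ) := by simp
  have key1 : ∑ i ∈ T, (lam i - a * (1 - x i)) ≤ ∑ i ∈ T, lam i * x i := by
    apply Finset.sum_le_sum
    intro i hi
    nlinarith [hTa i hi, hx1 i]
  have key2 : ∑ i ∈ Tᶜ, b * x i ≤ ∑ i ∈ Tᶜ, lam i * x i := by
    apply Finset.sum_le_sum
    intro i hi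
    exact mul_le_mul_of_nonneg_right (hTb i (by simpa using hi)) (hx0 i)
  have e1 : ∑ i ∈ T, (lam i - a * (1 - x i))
      = ∑ i ∈ T, lam i - a * ((T.card : ℝ) - ∑ i ∈ T, x i) := by
    rw [Finset.sum_sub_distrib, ← Finset.mul_sum, Finset.sum_sub_distrib, hcard]
  have e2 : ∑ i ∈ Tᶜ, b * x i = b * ∑ i ∈ Tᶜ, x i := by rw [Finset.mul_sum]
  rw [e1] at key1
  rw [e2] at key2
  have : (T.card : ℝ) - ∑ i ∈ T, x i = ∑ i ∈ Tᶜ, x i := by linarith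
  rw [this] at key1
  linarith

lemma scalar_master (lam z : Fin n → ℝ) (T : Finset (Fin n)) (a b : ℝ)
    (hTb : ∀ i ∈ T, b ≤ lam i) (hTa : ∀ i ∉ T, lam i ≤ a) (hgap : a + 1 ≤ b)
    (hz0 : ∀ i, 0 ≤ z i) (hz1 : ∀ i, z i ≤ 1) (hsum : ∑ i, z i = (T.card : ℝ)) :
    ∑ i, (z i - z i * z i) ≤ 2 * (∑ i ∈ T, lam i - ∑ i, lam i * z i) := by
  have splitz : ∑ i ∈ T, z i + ∑ i ∈ Tᶜ, z i = (T.card : ℝ) := by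
    rw [Finset.sum_add_sum_compl]; exact hsum
  set S := ∑ i ∈ Tᶜ, z i with hS
  have hS0 : 0 ≤ S := Finset.sum_nonneg fun i _ => hz0 i
  have hcard : ∑ i ∈ T, (1:ℝ) = (T.card : ℝ) := by simp
  -- lower bound for the gain
  have key1 : ∑ i ∈ T, (b * (1 - z i)) ≤ ∑ i ∈ T, (lam i - lam i * z i) := by
    apply Finset.sum_le_sum
    intro i hi
    nlinarith [hTb i hi, hz1 i]
  have key2 : ∑ i ∈ Tᶜ, lam i * z i ≤ ∑ i ∈ Tᶜ, a * z i := by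
    apply Finset.sum_le_sum
    intro i hi
    exact mul_le_mul_of_nonneg_right (hTa i (by simpa using hi)) (hz0 i)
  have e1 : ∑ i ∈ T, (b * (1 - z i)) = b * ((T.card : ℝ) - ∑ i ∈ T, z i) := by
    rw [← Finset.mul_sum, Finset.sum_sub_distrib, hcard]
  have e2 : ∑ i ∈ Tᶜ, a * z i = a * S := by rw [Finset.mul_sum]
  have e3 : ∑ i ∈ T, (lam i - lam i * z i) = ∑ i ∈ T, lam i - ∑ i ∈ T, lam i * z i := by
    rw [Finset.sum_sub_distrib]
  have e4 : (T.card : ℝ) - ∑ i ∈ T, z i = S := by linarith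
  have splitl : ∑ i, lam i * z i = ∑ i ∈ T, lam i * z i + ∑ i ∈ Tᶜ, lam i * z i :=
    (Finset.sum_add_sum_compl T _).symm
  have gain : S ≤ ∑ i ∈ T, lam i - ∑ i, lam i * z i := by
    rw [e1, e4] at key1
    rw [e2] at key2
    rw [e3] at key1
    nlinarith
  -- upper bound for fractionality
  have frac : ∑ i, (z i - z i * z i) ≤ 2 * S := by
    have splitf : ∑ i, (z i - z i * z i)
        = ∑ i ∈ T, (z i - z i * z i) + ∑ i ∈ Tᶜ, (z i - z i * z i) :=
      (Finset.sum_add_sum_compl T _).symm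
    have f1 : ∑ i ∈ T, (z i - z i * z i) ≤ ∑ i ∈ T, (1 - z i) := by
      apply Finset.sum_le_sum
      intro i _
      nlinarith [hz0 i, hz1 i]
    have f2 : ∑ i ∈ Tᶜ, (z i - z i * z i) ≤ ∑ i ∈ Tᶜ, z i := by
      apply Finset.sum_le_sum
      intro i _
      nlinarith [hz0 i, hz1 i]
    have f3 : ∑ i ∈ T, ((1:ℝ) - z i) = (T.card : ℝ) - ∑ i ∈ T, z i := by
      rw [Finset.sum_sub_distrib, hcard]
    rw [splitf]
    rw [f3] at f1
    rw [e4] at f1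
    linarith
  linarith

-- ### vector helpers
lemma dot_self_nonneg (u : Fin n → ℝ) : 0 ≤ u ⬝ᵥ u :=
  Finset.sum_nonneg fun i _ => mul_self_nonneg _

lemma dot_self_pos {u : Fin n → ℝ} (hu : u ≠ 0) : 0 < u ⬝ᵥ u := by
  rcases Function.ne_iff.mp hu with ⟨i, hi⟩
  exact Finset.sum_pos' (fun j _ => mul_self_nonneg _)
    ⟨i, Finset.mem_univ i, mul_self_pos.mpr (by simpa using hi)⟩

lemma dot_conj (hV : Vᵀ * V = 1) (u : Fin n → ℝ) :
    (Vᵀ *ᵥ u) ⬝ᵥ (Vᵀ *ᵥ u) = u ⬝ᵥ u := by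
  rw [Matrix.dotProduct_mulVec, Matrix.vecMul_transpose, Matrix.mulVec_mulVec, vvt hV,
    Matrix.one_mulVec]

lemma recover (hV : Vᵀ * V = 1) (u : Fin n → ℝ) : V *ᵥ (Vᵀ *ᵥ u) = u := by
  rw [Matrix.mulVec_mulVec, vvt hV, Matrix.one_mulVec]

lemma quadform_eq (hV : Vᵀ * V = 1) (lam : Fin n → ℝ) (u : Fin n → ℝ) :
    u ⬝ᵥ ((V * diagonal lam * Vᵀ) *ᵥ u) = ∑ j, lam j * ((Vᵀ *ᵥ u) j * (Vᵀ *ᵥ u) j) := by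
  rw [← Matrix.mulVec_mulVec, ← Matrix.mulVec_mulVec]
  rw [Matrix.dotProduct_mulVec u V, ← Matrix.mulVec_transpose]
  simp [Matrix.mulVec_diagonal, dotProduct, Finset.mul_sum]
  exact Finset.sum_congr rfl fun j _ => by ring

lemma mulVec_conj_zero_iff (hV : Vᵀ * V = 1) (d : Fin n → ℝ) (u : Fin n → ℝ) :
    (V * diagonal d * Vᵀ) *ᵥ u = 0 ↔ ∀ j, d j * (Vᵀ *ᵥ u) j = 0 := by
  constructor
  · intro h
    have h2 : Vᵀ *ᵥ ((V * diagonal d * Vᵀ) *ᵥ u) = 0 := by rw [h, Matrix.mulVec_zero]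
    rw [Matrix.mulVec_mulVec, ← Matrix.mul_assoc, ← Matrix.mul_assoc, hV, Matrix.one_mul] at h2
    intro j
    have := congrFun h2 j
    rw [← Matrix.mulVec_mulVec, Matrix.mulVec_diagonal] at this
    simpa using this
  · intro h
    have : diagonal d *ᵥ (Vᵀ *ᵥ u) = 0 := by
      funext j
      rw [Matrix.mulVec_diagonal]
      exact h j
    rw [← Matrix.mulVec_mulVec, ← Matrix.mulVec_mulVec, this, Matrix.mulVec_zero]

lemma dot_sq_le (u v : Fin n → ℝ) : (u ⬝ᵥ v) ^ 2 ≤ (u ⬝ᵥ u) * (v ⬝ᵥ v) := by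
  have h := Finset.sum_mul_sq_le_sq_mul_sq Finset.univ u v
  have e1 : ∑ i, u i ^ 2 = u ⬝ᵥ u := by simp [dotProduct, sq]
  have e2 : ∑ i, v i ^ 2 = v ⬝ᵥ v := by simp [dotProduct, sq]
  rw [e1, e2] at h
  exact h

lemma abs_dot_le {u v : Fin n → ℝ} {c : ℝ} (hc : 0 ≤ c) (h : (v ⬝ᵥ v) ≤ c ^ 2 * (u ⬝ᵥ u)) :
    |u ⬝ᵥ v| ≤ c * (u ⬝ᵥ u) := by
  have h2 := dot_sq_le u v
  have h3 : (u ⬝ᵥ v) ^ 2 ≤ (c * (u ⬝ᵥ u)) ^ 2 := by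
    nlinarith [dot_self_nonneg u, dot_self_nonneg v]
  have h4 : |u ⬝ᵥ v| = Real.sqrt ((u ⬝ᵥ v) ^ 2) := (Real.sqrt_sq_eq_abs _).symm
  rw [h4]
  calc Real.sqrt ((u ⬝ᵥ v) ^ 2) ≤ Real.sqrt ((c * (u ⬝ᵥ u)) ^ 2) := Real.sqrt_le_sqrt h3
    _ = |c * (u ⬝ᵥ u)| := Real.sqrt_sq_eq_abs _
    _ = c * (u ⬝ᵥ u) := abs_of_nonneg (mul_nonneg hc (dot_self_nonneg u))

lemma mulVec_fip_bound (E : Matrix (Fin n) (Fin n) ℝ) (u : Fin n → ℝ) :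
    (E *ᵥ u) ⬝ᵥ (E *ᵥ u) ≤ fip E E * (u ⬝ᵥ u) := by
  have key : ∀ i, (E *ᵥ u) i * (E *ᵥ u) i ≤ (∑ j, E i j * E i j) * (u ⬝ᵥ u) := by
    intro i
    have h := Finset.sum_mul_sq_le_sq_mul_sq Finset.univ (E i) u
    have e0 : (E *ᵥ u) i = ∑ j, E i j * u j := rfl
    have e1 : ∑ j, E i j ^ 2 = ∑ j, E i j * E i j := by simp [sq]
    have e2 : ∑ j, u j ^ 2 = u ⬝ᵥ u := by simp [dotProduct, sq]
    rw [e1, e2] at h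
    calc (E *ᵥ u) i * (E *ᵥ u) i = (∑ j, E i j * u j) ^ 2 := by rw [e0]; ring
      _ ≤ (∑ j, E i j * E i j) * (u ⬝ᵥ u) := h
  calc (E *ᵥ u) ⬝ᵥ (E *ᵥ u) = ∑ i, (E *ᵥ u) i * (E *ᵥ u) i := rfl
    _ ≤ ∑ i, (∑ j, E i j * E i j) * (u ⬝ᵥ u) := Finset.sum_le_sum fun i _ => key i
    _ = fip E E * (u ⬝ᵥ u) := by rw [fip, ← Finset.sum_mul]

-- ### Part D

lemma dot_mulVec_self (hV : Vᵀ * V = 1) (x : Fin n → ℝ) :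
    (V *ᵥ x) ⬝ᵥ (V *ᵥ x) = x ⬝ᵥ x := by
  rw [Matrix.dotProduct_mulVec, ← Matrix.mulVec_transpose, Matrix.mulVec_mulVec, hV,
    Matrix.one_mulVec]

lemma isUnit_det (hV : Vᵀ * V = 1) : IsUnit V.det := by
  have h : V.det * V.det = 1 := by
    have := congrArg Matrix.det hV
    rwa [Matrix.det_mul, Matrix.det_transpose, Matrix.det_one] at this
  exact isUnit_iff_exists_inv.mpr ⟨_, h⟩

lemma rank_conj (hV : Vᵀ * V = 1) (d : Fin n → ℝ) :
    (V * diagonal d * Vᵀ).rank = (Finset.univ.filter (fun i => d i ≠ 0)).card := by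
  rw [Matrix.mul_assoc, Matrix.rank_mul_eq_right_of_isUnit_det V _ (isUnit_det hV),
    Matrix.rank_mul_eq_left_of_isUnit_det Vᵀ _ (by rw [Matrix.det_transpose]; exact isUnit_det hV),
    Matrix.rank_diagonal, Fintype.card_subtype]

lemma fip_expand_sub (X Y : Matrix (Fin n) (Fin n) ℝ) :
    fip (X - Y) (X - Y) = fip X X - 2 * fip X Y + fip Y Y := by
  rw [fip_sub_left, fip_sub_right, fip_sub_right, fip_comm Y X]; ring

lemma frobNorm_le_of_fip_le {A B : Matrix (Fin n) (Fin n) ℝ}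
    (h : fip A A ≤ fip B B) : frobNorm A ≤ frobNorm B := by
  rw [frobNorm_eq, frobNorm_eq]; exact Real.sqrt_le_sqrt h

lemma col_dot_one (hV : Vᵀ * V = 1) (j : Fin n) :
    (fun i => V i j) ⬝ᵥ (fun i => V i j) = 1 := by
  have : (Vᵀ * V) j j = (1 : Matrix (Fin n) (Fin n) ℝ) j j := by rw [hV]
  simp only [Matrix.mul_apply, Matrix.transpose_apply, Matrix.one_apply_eq] at this
  simpa [dotProduct] using this

lemma mulVec_col (M V : Matrix (Fin n) (Fin n) ℝ) (j : Fin n) :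
    M *ᵥ (fun i => V i j) = fun i => (M * V) i j := by
  funext i
  simp [Matrix.mulVec, Matrix.mul_apply, dotProduct]

/-- every eigenvalue of `V diag lam Vᵀ` is within `frobNorm E` of some eigenvalue of
`V' diag mu V'ᵀ`. -/
lemma eig_localize {V V' : Matrix (Fin n) (Fin n) ℝ} (hV : Vᵀ * V = 1) (hV' : V'ᵀ * V' = 1)
    (lam mu : Fin n → ℝ) (j : Fin n) :
    ∃ i, |lam j - mu i| ≤ frobNorm (V * diagonal lam * Vᵀ - V' * diagonal mu * V'ᵀ) := by
  by_contra hcon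
  push_neg at hcon
  set W := V * diagonal lam * Vᵀ with hW
  set W' := V' * diagonal mu * V'ᵀ with hW'
  set E := W - W' with hE
  set e := frobNorm E with he
  have he0 : 0 ≤ e := frobNorm_nonneg E
  set v : Fin n → ℝ := fun i => V i j with hv
  have hv1 : v ⬝ᵥ v = 1 := col_dot_one hV j
  -- W *ᵥ v = lam j • v
  have hWv : W *ᵥ v = lam j • v := by
    rw [hv, mulVec_col W V]
    have : W * V = V * diagonal lam := by
      rw [hW, Matrix.mul_assoc, hV, Matrix.mul_one]
    rw [this]
    funext i
    simp [Matrix.mul_diagonal, mul_comm]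
  set c : Fin n → ℝ := V'ᵀ *ᵥ v with hc
  have hc1 : c ⬝ᵥ c = 1 := by rw [hc, dot_conj hV', hv1]
  -- (W' - lam j • 1) *ᵥ v = -(E *ᵥ v)
  have h1 : V' * diagonal (fun _ : Fin n => lam j) * V'ᵀ = lam j • (1 : Matrix (Fin n) (Fin n) ℝ) := by
    have hd1 : diagonal (fun _ : Fin n => lam j) = lam j • diagonal (fun _ : Fin n => (1:ℝ)) := by
      ext a b
      by_cases hab : a = b <;> simp [Matrix.diagonal_apply, hab]
    rw [hd1, Matrix.mul_smul, Matrix.smul_mul, conj_one hV']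
  have expand : V' * diagonal (fun i => lam j - mu i) * V'ᵀ
      = lam j • (1 : Matrix (Fin n) (Fin n) ℝ) - W' := by
    rw [← h1, hW', ← Matrix.sub_mul, ← Matrix.mul_sub]
    have : diagonal (fun _ : Fin n => lam j) - diagonal mu
        = diagonal (fun i => lam j - mu i) := by
      rw [Matrix.diagonal_sub]
    rw [this]
  have hEv : E *ᵥ v = (V' * diagonal (fun i => lam j - mu i) * V'ᵀ) *ᵥ v := by
    rw [expand, hE, Matrix.sub_mulVec, Matrix.sub_mulVec, hWv, Matrix.smul_mulVec,
      Matrix.one_mulVec]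
  have key : (E *ᵥ v) ⬝ᵥ (E *ᵥ v) = ∑ i, (mu i - lam j) * (mu i - lam j) * (c i * c i) := by
    rw [hEv, ← Matrix.mulVec_mulVec, ← Matrix.mulVec_mulVec, dot_mulVec_self hV']
    simp only [Matrix.mulVec_diagonal, dotProduct]
    exact Finset.sum_congr rfl fun i _ => by rw [hc]; ring
  have hbound : (E *ᵥ v) ⬝ᵥ (E *ᵥ v) ≤ e * e := by
    have := mulVec_fip_bound E v
    rw [hv1, mul_one] at this
    calc (E *ᵥ v) ⬝ᵥ (E *ᵥ v) ≤ fip E E := this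
      _ = e * e := by
          have := frobNorm_sq E
          rw [← he] at this  -- e^2 = fip E E
          nlinarith [this]
  -- strict lower bound
  obtain ⟨i0, hi0⟩ : ∃ i0, c i0 ≠ 0 := by
    by_contra hall
    push_neg at hall
    have : c ⬝ᵥ c = 0 := by simp [dotProduct, hall]
    rw [hc1] at this; norm_num at this
  have hstrict : e * e < ∑ i, (mu i - lam j) * (mu i - lam j) * (c i * c i) := by
    have hterm : ∀ i, e * e * (c i * c i) ≤ (mu i - lam j) * (mu i - lam j) * (c i * c i) := by
      intro i
      have h1 : e < |lam j - mu i| := hcon i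
      have h2 : e * e < (mu i - lam j) * (mu i - lam j) := by
        have := mul_self_lt_mul_self he0 h1
        rw [abs_mul_abs_self] at this
        nlinarith
      nlinarith [mul_self_nonneg (c i)]
    have hterm0 : e * e * (c i0 * c i0) < (mu i0 - lam j) * (mu i0 - lam j) * (c i0 * c i0) := by
      have h1 : e < |lam j - mu i0| := hcon i0
      have h2 : e * e < (mu i0 - lam j) * (mu i0 - lam j) := by
        have := mul_self_lt_mul_self he0 h1
        rw [abs_mul_abs_self] at this
        nlinarith
      have := mul_self_pos.mpr hi0
      nlinarith
    have hsum : ∑ i, e * e * (c i * c i) < ∑ i, (mu i - lam j) * (mu i - lam j) * (c i * c i) :=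
      Finset.sum_lt_sum (fun i _ => hterm i) ⟨i0, Finset.mem_univ i0, hterm0⟩
    have : ∑ i, e * e * (c i * c i) = e * e := by
      rw [← Finset.mul_sum]
      have : ∑ i, c i * c i = 1 := hc1
      rw [this, mul_one]
    linarith
  linarith [key ▸ hbound]

/-- the candidate `Q` is the minimizer over the Fantope. -/
lemma master_min (hV : Vᵀ * V = 1) (lam : Fin n → ℝ) (T : Finset (Fin n)) (hcard : T.card = k)
    (a b : ℝ) (hTb : ∀ j ∈ T, b ≤ lam j) (hTa : ∀ j ∉ T, lam j ≤ a) (hgap : a + 1 ≤ b)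
    {Z : Matrix (Fin n) (Fin n) ℝ} (hZ : Z ∈ Fantope n k) :
    frobNorm (V * diagonal (fun j => if j ∈ T then (1:ℝ) else 0) * Vᵀ
        - V * diagonal lam * Vᵀ)
      ≤ frobNorm (Z - V * diagonal lam * Vᵀ) := by
  set d : Fin n → ℝ := fun j => if j ∈ T then (1:ℝ) else 0 with hd
  set Q := V * diagonal d * Vᵀ with hQ
  set W := V * diagonal lam * Vᵀ with hW
  have hZconj : Vᵀ * Z * V ∈ Fantope n k := fantope_conj_mem hV hZ
  let z : Fin n → ℝ := fun i => (Vᵀ * Z * V) i i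
  have hz0 : ∀ i, 0 ≤ z i := fun i => fantope_diag_nonneg hZconj i
  have hz1 : ∀ i, z i ≤ 1 := fun i => fantope_diag_le_one hZconj i
  have hzsum : ∑ i, z i = (T.card : ℝ) := by
    rw [hcard]
    show ∑ i, (Vᵀ * Z * V) i i = (k : ℝ)
    exact fantope_diag_sum hZconj
  have hQQ : fip Q Q = (T.card : ℝ) := by
    rw [hQ, fip_conj_diag hV, conj_cancel hV]
    simp [hd, Matrix.diagonal_apply_eq]
  have hQW : fip Q W = ∑ j ∈ T, lam j := by
    rw [hQ, fip_conj_diag hV, hW, conj_cancel hV]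
    simp only [Matrix.diagonal_apply_eq, hd, ite_mul, one_mul, zero_mul]
    rw [Finset.sum_ite_mem, Finset.univ_inter]
  have hWZ : fip W Z = ∑ i, lam i * z i := by rw [hW, fip_conj_diag hV]
  have hZZ : ∑ i, z i * z i ≤ fip Z Z := by
    have := diag_sq_le (Vᵀ * Z * V)
    rw [fip_conj_conj hV] at this
    exact this
  have scal := scalar_master lam z T a b hTb hTa hgap hz0 hz1 hzsum
  have key : fip (Q - W) (Q - W) ≤ fip (Z - W) (Z - W) := by
    rw [fip_expand_sub, fip_expand_sub]
    have e1 : fip Z W = fip W Z := fip_comm Z W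
    have e2 : ∑ i, (z i - z i * z i) = ∑ i, z i - ∑ i, z i * z i := by
      rw [Finset.sum_sub_distrib]
    rw [e1, hQQ, hQW, hWZ]
    rw [e2, hzsum] at scal
    nlinarith
  exact frobNorm_le_of_fip_le key

/-- uniqueness of the Fantope projection. -/
lemma proj_unique {W Q Y : Matrix (Fin n) (Fin n) ℝ}
    (hQmem : Q ∈ Fantope n k) (hQmin : ∀ Z ∈ Fantope n k, frobNorm (Q - W) ≤ frobNorm (Z - W))
    (hYmem : Y ∈ Fantope n k) (hYmin : ∀ Z ∈ Fantope n k, frobNorm (Y - W) ≤ frobNorm (Z - W)) :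
    Y = Q := by
  set M := (1 - (1/2 : ℝ)) • Y + (1/2 : ℝ) • Q with hM
  have hMmem : M ∈ Fantope n k := fantope_convex hYmem hQmem (by norm_num) (by norm_num)
  have heq : frobNorm (Y - W) = frobNorm (Q - W) :=
    le_antisymm (hYmin Q hQmem) (hQmin Y hYmem)
  set m := frobNorm (Q - W) with hm
  have hMW : M - W = (1/2 : ℝ) • (Y - W) + (1/2 : ℝ) • (Q - W) := by
    rw [hM]
    module
  have hfipM : fip (M - W) (M - W)
      = (1/4) * fip (Y - W) (Y - W) + (1/2) * fip (Y - W) (Q - W)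
        + (1/4) * fip (Q - W) (Q - W) := by
    rw [hMW, fip_expand_add, fip_smul_left, fip_smul_left, fip_smul_right, fip_smul_right,
      fip_smul_left, fip_smul_right]
    ring
  have hYW : fip (Y - W) (Y - W) = m ^ 2 := by rw [← frobNorm_sq, heq]
  have hQW2 : fip (Q - W) (Q - W) = m ^ 2 := by rw [← frobNorm_sq]
  have hmM : m ≤ frobNorm (M - W) := heq ▸ hYmin M hMmem
  have hm0 : 0 ≤ m := frobNorm_nonneg _
  have hm2 : m ^ 2 ≤ fip (M - W) (M - W) := by
    rw [← frobNorm_sq]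
    nlinarith [frobNorm_nonneg (M - W)]
  have hcross : m ^ 2 ≤ fip (Y - W) (Q - W) := by
    rw [hfipM, hYW, hQW2] at hm2
    linarith
  have hdiff : fip (Y - Q) (Y - Q) ≤ 0 := by
    have : Y - Q = (Y - W) - (Q - W) := by abel
    rw [this, fip_expand_sub, hYW, hQW2]
    linarith
  have : fip (Y - Q) (Y - Q) = 0 := le_antisymm hdiff (fip_self_nonneg _)
  apply eq_of_frobNorm_sub_eq_zero
  rw [frobNorm_eq, this, Real.sqrt_zero]

-- ### Part E

lemma conj_diag_apply (V : Matrix (Fin n) (Fin n) ℝ) (d : Fin n → ℝ) (i j : Fin n) :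
    (V * diagonal d * Vᵀ) i j = ∑ l, V i l * d l * V j l := by
  rw [Matrix.mul_apply]
  simp only [Matrix.mul_diagonal, Matrix.transpose_apply]

lemma isHermitian_of_isSymm {A : Matrix (Fin n) (Fin n) ℝ} (h : A.IsSymm) : A.IsHermitian := by
  rwa [Matrix.IsHermitian, Matrix.conjTranspose_eq_transpose_of_trivial]

lemma conj_idem (hV : Vᵀ * V = 1) (d : Fin n → ℝ) (hd : ∀ i, d i * d i = d i) :
    (V * diagonal d * Vᵀ) * (V * diagonal d * Vᵀ) = V * diagonal d * Vᵀ := by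
  simp only [Matrix.mul_assoc]
  rw [← Matrix.mul_assoc Vᵀ V, hV, Matrix.one_mul,
    ← Matrix.mul_assoc (diagonal d) (diagonal d), Matrix.diagonal_mul_diagonal]
  have : (fun i => d i * d i) = d := funext hd
  rw [this]

lemma quadform_upper (hV : Vᵀ * V = 1) (lam : Fin n → ℝ) (u : Fin n → ℝ)
    (s : Finset (Fin n)) (hsupp : ∀ j ∈ s, (Vᵀ *ᵥ u) j = 0) (a : ℝ)
    (ha : ∀ j ∉ s, lam j ≤ a) :
    u ⬝ᵥ ((V * diagonal lam * Vᵀ) *ᵥ u) ≤ a * (u ⬝ᵥ u) := by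
  rw [quadform_eq hV]
  have hu : u ⬝ᵥ u = ∑ j, (Vᵀ *ᵥ u) j * (Vᵀ *ᵥ u) j := by
    rw [← dot_conj hV u]; rfl
  rw [hu, Finset.mul_sum]
  apply Finset.sum_le_sum
  intro j _
  by_cases hj : j ∈ s
  · rw [hsupp j hj]; simp
  · exact mul_le_mul_of_nonneg_right (ha j hj) (mul_self_nonneg _)

lemma quadform_lower (hV : Vᵀ * V = 1) (lam : Fin n → ℝ) (u : Fin n → ℝ)
    (s : Finset (Fin n)) (hsupp : ∀ j ∈ s, (Vᵀ *ᵥ u) j = 0) (b : ℝ)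
    (hb : ∀ j ∉ s, b ≤ lam j) :
    b * (u ⬝ᵥ u) ≤ u ⬝ᵥ ((V * diagonal lam * Vᵀ) *ᵥ u) := by
  rw [quadform_eq hV]
  have hu : u ⬝ᵥ u = ∑ j, (Vᵀ *ᵥ u) j * (Vᵀ *ᵥ u) j := by
    rw [← dot_conj hV u]; rfl
  rw [hu, Finset.mul_sum]
  apply Finset.sum_le_sum
  intro j _
  by_cases hj : j ∈ s
  · rw [hsupp j hj]; simp
  · exact mul_le_mul_of_nonneg_right (hb j hj) (mul_self_nonneg _)

lemma abs_quad_E_le (E : Matrix (Fin n) (Fin n) ℝ) (u : Fin n → ℝ) :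
    |u ⬝ᵥ (E *ᵥ u)| ≤ frobNorm E * (u ⬝ᵥ u) := by
  apply abs_dot_le (frobNorm_nonneg E)
  have h := mulVec_fip_bound E u
  rw [← frobNorm_sq E] at h
  exact h

/-- dimension counting: if the "kernel coefficients on `T`" and "range of the `S`-projector"
intersect trivially, then `S.card ≤ T.card`. -/
lemma count_split {V V' : Matrix (Fin n) (Fin n) ℝ} (hV : Vᵀ * V = 1) (hV' : V'ᵀ * V' = 1)
    (T S : Finset (Fin n))
    (hdisj : ∀ u : Fin n → ℝ, u ≠ 0 → (∀ j ∈ T, (Vᵀ *ᵥ u) j = 0) →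
      (∀ i ∉ S, (V'ᵀ *ᵥ u) i = 0) → False) :
    S.card ≤ T.card := by
  classical
  set dT : Fin n → ℝ := fun j => if j ∈ T then 1 else 0 with hdT
  set dS : Fin n → ℝ := fun i => if i ∈ S then 1 else 0 with hdS
  set Q := V * diagonal dT * Vᵀ with hQ
  set P := V' * diagonal dS * V'ᵀ with hP
  set A := LinearMap.ker Q.mulVecLin with hA
  set B := LinearMap.range P.mulVecLin with hB
  have hPP : P * P = P := conj_idem hV' dS (fun i => by by_cases h : i ∈ S <;> simp [hdS, h])
  have hABbot : A ⊓ B = ⊥ := by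
    rw [Submodule.eq_bot_iff]
    rintro u ⟨huA, huB⟩
    by_contra hu0
    apply hdisj u hu0
    · intro j hj
      have hker : Q *ᵥ u = 0 := huA
      have := (mulVec_conj_zero_iff hV dT u).mp hker j
      rcases mul_eq_zero.mp this with h | h
      · exfalso; rw [hdT] at h; simp [hj] at h
      · exact h
    · intro i hi
      obtain ⟨x, hx⟩ := huB
      have hPu : P *ᵥ u = u := by
        rw [← hx]
        show P *ᵥ (P *ᵥ x) = P *ᵥ x
        rw [Matrix.mulVec_mulVec, hPP]
      have hker : ((1 : Matrix (Fin n) (Fin n) ℝ) - P) *ᵥ u = 0 := by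
        rw [Matrix.sub_mulVec, hPu, Matrix.one_mulVec, sub_self]
      rw [hP, conj_sub_diag hV'] at hker
      have := (mulVec_conj_zero_iff hV' _ u).mp hker i
      rcases mul_eq_zero.mp this with h | h
      · exfalso; rw [hdS] at h; simp [hi] at h
      · exact h
  have hrankQ : Q.rank = T.card := by
    rw [hQ, rank_conj hV]
    congr 1
    ext j
    simp [hdT]
  have hrankP : P.rank = S.card := by
    rw [hP, rank_conj hV']
    congr 1
    ext i
    simp [hdS]
  have hfinA : Module.finrank ℝ A + Q.rank = n := by
    have := LinearMap.finrank_range_add_finrank_ker Q.mulVecLin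
    rw [Module.finrank_pi, Fintype.card_fin] at this
    have hr : Q.rank = Module.finrank ℝ (LinearMap.range Q.mulVecLin) := rfl
    rw [hA, hr]
    omega
  have hfinB : Module.finrank ℝ B = S.card := by
    rw [hB, ← hrankP]; rfl
  have hsum := Submodule.finrank_sup_add_finrank_inf_eq A B
  rw [hABbot] at hsum
  have hle : Module.finrank ℝ (A ⊔ B : Submodule ℝ (Fin n → ℝ)) ≤ n := by
    have := Submodule.finrank_le (A ⊔ B : Submodule ℝ (Fin n → ℝ))
    rwa [Module.finrank_pi, Fintype.card_fin] at this
  rw [finrank_bot, add_zero] at hsum  -- check name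
  have hTn : Q.rank ≤ n := by
    omega
  omega

/-- sorted eigendecomposition of a symmetric matrix. -/
lemma sorted_eigendata {M : Matrix (Fin n) (Fin n) ℝ} (hM : M.IsHermitian) :
    ∃ V : Matrix (Fin n) (Fin n) ℝ, Vᵀ * V = 1 ∧
      M = V * diagonal (hM.eigenvalues ∘ Tuple.sort hM.eigenvalues) * Vᵀ := by
  classical
  set U : Matrix (Fin n) (Fin n) ℝ := (Matrix.IsHermitian.eigenvectorUnitary hM : Matrix (Fin n) (Fin n) ℝ) with hU
  have hstar : star U = Uᵀ := by
    rw [Matrix.star_eq_conjTranspose, Matrix.conjTranspose_eq_transpose_of_trivial]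
  have hUunit : Uᵀ * U = 1 := by
    have h : star U * U = 1 := Unitary.coe_star_mul_self hM.eigenvectorUnitary
    rwa [hstar] at h
  have hdiag : diagonal (RCLike.ofReal ∘ hM.eigenvalues : Fin n → ℝ)
      = diagonal hM.eigenvalues := by
    congr 1
  have hspec : M = U * diagonal hM.eigenvalues * Uᵀ := by
    calc M = U * diagonal (RCLike.ofReal ∘ hM.eigenvalues) * star U := hM.spectral_theorem
      _ = U * diagonal hM.eigenvalues * Uᵀ := by rw [hdiag, hstar]
  set σ := Tuple.sort hM.eigenvalues with hσ
  refine ⟨U.submatrix id σ, ?_, ?_⟩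
  · ext i j
    simp only [Matrix.mul_apply, Matrix.transpose_apply, Matrix.submatrix_apply, id_eq]
    have : ∑ l, U l (σ i) * U l (σ j) = (Uᵀ * U) (σ i) (σ j) := by
      simp [Matrix.mul_apply, Matrix.transpose_apply]
    rw [this, hUunit]
    by_cases h : i = j
    · subst h; simp
    · have : σ i ≠ σ j := fun hc => h (σ.injective hc)
      simp [Matrix.one_apply, h, this]
  · refine hspec.trans ?_
    ext i j
    have lhs : (U * diagonal hM.eigenvalues * Uᵀ) i j
        = ∑ l, U i l * hM.eigenvalues l * U j l := conj_diag_apply U _ i j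
    have rhs : (U.submatrix id σ * diagonal (hM.eigenvalues ∘ σ) * (U.submatrix id σ)ᵀ) i j
        = ∑ l, U i (σ l) * hM.eigenvalues (σ l) * U j (σ l) := by
      rw [conj_diag_apply]
      simp only [Matrix.submatrix_apply, id_eq, Function.comp_apply]
    rw [lhs, rhs]
    exact (Equiv.sum_comp σ (fun l => U i l * hM.eigenvalues l * U j l)).symm

/-- first-order optimality over the Fantope. -/
lemma optimality_vi (f : Matrix (Fin n) (Fin n) ℝ → ℝ)
    (grad : Matrix (Fin n) (Fin n) ℝ → Matrix (Fin n) (Fin n) ℝ)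
    (β : ℝ) (hβ : 0 < β)
    (hgradSymm : ∀ X : Matrix (Fin n) (Fin n) ℝ, (grad X).IsSymm)
    (hconv : ∀ X Y : Matrix (Fin n) (Fin n) ℝ, X.IsSymm → Y.IsSymm →
      f X + (grad X * (Y - X)).trace ≤ f Y)
    (hsmooth : ∀ X Y : Matrix (Fin n) (Fin n) ℝ, X.IsSymm → Y.IsSymm →
      frobNorm (grad X - grad Y) ≤ β * frobNorm (X - Y))
    {Xstar : Matrix (Fin n) (Fin n) ℝ}
    (hXstarMem : Xstar ∈ Fantope n k)
    (hXstarOpt : ∀ X ∈ Fantope n k, f Xstar ≤ f X) :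
    ∀ Z ∈ Fantope n k, 0 ≤ fip (grad Xstar) (Z - Xstar) := by
  intro Z hZ
  set D := Z - Xstar with hD
  set c := fip (grad Xstar) D with hc
  set fD := frobNorm D with hfD
  have hfD0 : 0 ≤ fD := frobNorm_nonneg D
  have key : ∀ t : ℝ, 0 < t → t ≤ 1 → -(β * t * fD ^ 2) ≤ c := by
    intro t ht0 ht1
    set Xt := (1 - t) • Xstar + t • Z with hXt
    have hXtmem : Xt ∈ Fantope n k := fantope_convex hXstarMem hZ (le_of_lt ht0) ht1
    have hXtsymm : Xt.IsSymm := hXtmem.1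
    have hXtD : Xt - Xstar = t • D := by rw [hXt, hD]; module
    have hXstarXt : Xstar - Xt = (-t) • D := by rw [hXt, hD]; module
    have h1 : (grad Xt * (Xstar - Xt)).trace ≤ 0 := by
      have := hconv Xt Xstar hXtsymm hXstarMem.1
      have h2 := hXstarOpt Xt hXtmem
      linarith
    have h3 : (grad Xt * (Xstar - Xt)).trace = (-t) * fip (grad Xt) D := by
      rw [hXstarXt, Matrix.mul_smul, Matrix.trace_smul, trace_eq_fip (hgradSymm Xt), smul_eq_mul]
    have h4 : 0 ≤ fip (grad Xt) D := by
      rw [h3] at h1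
      nlinarith
    have h5 : fip (grad Xstar) D = fip (grad Xt) D + fip (grad Xstar - grad Xt) D := by
      rw [fip_sub_left]; ring
    have h6 : |fip (grad Xstar - grad Xt) D| ≤ (β * (t * fD)) * fD := by
      have hcs := abs_fip_le (grad Xstar - grad Xt) D
      have hsm := hsmooth Xstar Xt hXstarMem.1 hXtsymm
      have hnorm : frobNorm (Xstar - Xt) = t * fD := by
        rw [hXstarXt, frobNorm_smul, abs_neg, abs_of_pos ht0]
      rw [hnorm] at hsm
      calc |fip (grad Xstar - grad Xt) D| ≤ frobNorm (grad Xstar - grad Xt) * fD := hcs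
        _ ≤ (β * (t * fD)) * fD :=
            mul_le_mul_of_nonneg_right hsm hfD0
    have h7 : -(β * t * fD ^ 2) ≤ fip (grad Xstar - grad Xt) D := by
      have := neg_abs_le (fip (grad Xstar - grad Xt) D)
      nlinarith
    rw [hc, h5]
    linarith
  by_contra hcneg
  push_neg at hcneg
  set t := min 1 ((-c) / (β * (fD ^ 2 + 1))) with ht
  have hden : 0 < β * (fD ^ 2 + 1) := by positivity
  have ht0 : 0 < t := lt_min one_pos (div_pos (by linarith) hden)
  have ht1 : t ≤ 1 := min_le_left _ _
  have htle : t ≤ (-c) / (β * (fD ^ 2 + 1)) := min_le_right _ _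
  have hkey := key t ht0 ht1
  have hlt : β * t * fD ^ 2 < -c := by
    have h8 : β * t * fD ^ 2 ≤ β * ((-c) / (β * (fD ^ 2 + 1))) * fD ^ 2 := by
      have := mul_le_mul_of_nonneg_left htle (le_of_lt hβ)
      nlinarith [sq_nonneg fD]
    have h9 : β * ((-c) / (β * (fD ^ 2 + 1))) * fD ^ 2 < -c := by
      rw [mul_comm β, div_mul_eq_mul_div, mul_comm, ← mul_div_assoc, div_lt_iff₀ hden]
      nlinarith
    linarith
  linarith

/-- identification of the optimum with the bottom spectral projector. -/
lemma xstar_eq (hV : Vᵀ * V = 1) (w : Fin n → ℝ) {Xstar g : Matrix (Fin n) (Fin n) ℝ}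
    (hg : g = V * diagonal w * Vᵀ)
    (hVI : ∀ Z ∈ Fantope n k, 0 ≤ fip g (Z - Xstar))
    (hXmem : Xstar ∈ Fantope n k)
    (T0 : Finset (Fin n)) (hT0card : T0.card = k)
    {δ : ℝ} (hδ : 0 < δ) (a0 : ℝ) (hwa : ∀ i ∈ T0, w i ≤ a0)
    (hwb : ∀ i ∉ T0, a0 + δ ≤ w i) :
    Xstar = V * diagonal (fun i => if i ∈ T0 then (1:ℝ) else 0) * Vᵀ := by
  classical
  set d0 : Fin n → ℝ := fun i => if i ∈ T0 then (1:ℝ) else 0 with hd0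
  have hd0sum : ∑ i, d0 i = (k : ℝ) := by
    rw [hd0]
    simp only [Finset.sum_ite_mem, Finset.univ_inter, Finset.sum_const, nsmul_eq_mul, mul_one]
    rw [hT0card]
  have hP0mem : V * diagonal d0 * Vᵀ ∈ Fantope n k :=
    conj_mem_fantope hV (fun i => by rw [hd0]; by_cases h : i ∈ T0 <;> simp [h])
      (fun i => by rw [hd0]; by_cases h : i ∈ T0 <;> simp [h]) hd0sum
  set X' := Vᵀ * Xstar * V with hX'
  have hX'mem : X' ∈ Fantope n k := fantope_conj_mem hV hXmem
  have hx0 : ∀ i, 0 ≤ X' i i := fun i => fantope_diag_nonneg hX'mem i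
  have hx1 : ∀ i, X' i i ≤ 1 := fun i => fantope_diag_le_one hX'mem i
  have hxsum : ∑ i, X' i i = (T0.card : ℝ) := by rw [hT0card]; exact fantope_diag_sum hX'mem
  -- the VI forces all mass on T0
  have hgP0 : fip g (V * diagonal d0 * Vᵀ) = ∑ i ∈ T0, w i := by
    rw [hg, fip_conj_diag hV, conj_cancel hV]
    simp only [Matrix.diagonal_apply_eq, hd0, mul_ite, mul_one, mul_zero]
    rw [Finset.sum_ite_mem, Finset.univ_inter]
  have hgX : fip g Xstar = ∑ i, w i * X' i i := by rw [hg, fip_conj_diag hV]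
  have hvi := hVI _ hP0mem
  rw [fip_sub_right, hgP0, hgX] at hvi
  have hscal := scalar_lower w (fun i => X' i i) T0 a0 (a0 + δ) hwa hwb hx0 hx1 hxsum
  have hS0 : 0 ≤ ∑ i ∈ T0ᶜ, X' i i := Finset.sum_nonneg fun i _ => hx0 i
  have hSzero : ∑ i ∈ T0ᶜ, X' i i = 0 := by nlinarith
  have hvanish : ∀ i ∉ T0, X' i i = 0 := by
    intro i hi
    have := (Finset.sum_eq_zero_iff_of_nonneg (fun j _ => hx0 j)).mp hSzero i
      (Finset.mem_compl.mpr hi)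
    exact this
  -- off-support rows vanish
  have hcol : ∀ i ∉ T0, ∀ j, X' j i = 0 := fun i hi =>
    psd_col_zero hX'mem.2.1 i (hvanish i hi)
  have hrow : ∀ i ∉ T0, ∀ j, X' i j = 0 := fun i hi j => by
    rw [← hX'mem.1.apply i j]
    exact hcol i hi j
  -- D := diagonal d0 - X' is PSD with zero trace
  have hDpsd : (diagonal d0 - X').PosSemidef := by
    refine Matrix.PosSemidef.of_dotProduct_mulVec_nonneg ?_ ?_
    · exact isHermitian_of_isSymm ((Matrix.isSymm_diagonal d0).sub hX'mem.1)
    · intro x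
      rw [star_trivial]
      set y : Fin n → ℝ := fun i => if i ∈ T0 then x i else 0 with hy
      have hterm : ∀ i j, x i * ((diagonal d0 - X') i j * x j)
          = y i * (((1 : Matrix (Fin n) (Fin n) ℝ) - X') i j * y j) := by
        intro i j
        by_cases hi : i ∈ T0
        · by_cases hj : j ∈ T0
          · rw [hy]
            simp only [hi, hj, if_pos]
            have heq : (diagonal d0 - X') i j = ((1 : Matrix (Fin n) (Fin n) ℝ) - X') i j := by
              rw [Matrix.sub_apply, Matrix.sub_apply, Matrix.diagonal_apply, Matrix.one_apply]
              by_cases hij : i = j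
              · subst hij; rw [hd0]; simp [hi]
              · simp [hij]
            rw [heq]
          · have : (diagonal d0 - X') i j = 0 := by
              rw [Matrix.sub_apply, Matrix.diagonal_apply, hcol j hj i]
              by_cases hij : i = j
              · subst hij; exact absurd hi hj
              · simp [hij]
            rw [this, hy]
            simp [hj]
        · have : (diagonal d0 - X') i j = 0 := by
            rw [Matrix.sub_apply, Matrix.diagonal_apply, hrow i hi j]
            by_cases hij : i = j
            · subst hij; rw [hd0]; simp [hi]
            · simp [hij]
          rw [this, hy]
          simp [hi]
      have hexp : x ⬝ᵥ ((diagonal d0 - X') *ᵥ x)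
          = y ⬝ᵥ (((1 : Matrix (Fin n) (Fin n) ℝ) - X') *ᵥ y) := by
        simp only [dotProduct, Matrix.mulVec, Finset.mul_sum]
        exact Finset.sum_congr rfl fun i _ => Finset.sum_congr rfl fun j _ => hterm i j
      rw [hexp]
      have := hX'mem.2.2.1.dotProduct_mulVec_nonneg y
      rwa [star_trivial] at this
  have hDtrace : (diagonal d0 - X').trace = 0 := by
    rw [Matrix.trace_sub, Matrix.trace_diagonal]
    have : X'.trace = (k : ℝ) := hX'mem.2.2.2
    rw [this, hd0sum]
    ring
  have hDzero : diagonal d0 - X' = 0 := psd_trace_zero hDpsd hDtrace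
  have hX'eq : X' = diagonal d0 := by
    have := sub_eq_zero.mp hDzero
    exact this.symm
  -- undo the conjugation
  have : V * X' * Vᵀ = Xstar := by
    rw [hX']
    have e1 : V * (Vᵀ * Xstar * V) * Vᵀ = (V * Vᵀ) * Xstar * (V * Vᵀ) := by
      simp only [Matrix.mul_assoc]
    rw [e1, vvt hV, Matrix.one_mul, Matrix.mul_one]
  rw [← this, hX'eq]

lemma dot_sub_mulVec (A B : Matrix (Fin n) (Fin n) ℝ) (u : Fin n → ℝ) :
    u ⬝ᵥ ((A - B) *ᵥ u) = u ⬝ᵥ (A *ᵥ u) - u ⬝ᵥ (B *ᵥ u) := by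
  rw [Matrix.sub_mulVec, dotProduct_sub]

lemma eigval_eq {A : Matrix (Fin n) (Fin n) ℝ} (hA : A.IsHermitian) (j : ℕ) (hj : n - j < n) :
    eigval A j = (hA.eigenvalues ∘ Tuple.sort hA.eigenvalues) ⟨n - j, hj⟩ := by
  rw [eigval, dif_pos hA, dif_pos hj]

end StmtAux

set_option maxHeartbeats 2000000 in
open StmtAux in
theorem stmt8 {n k : ℕ} (hk : 0 < k) (hkn : k < n)
    (f : Matrix (Fin n) (Fin n) ℝ → ℝ)
    (grad : Matrix (Fin n) (Fin n) ℝ → Matrix (Fin n) (Fin n) ℝ)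
    (β : ℝ) (hβ : 0 < β)
    (hgradSymm : ∀ X : Matrix (Fin n) (Fin n) ℝ, (grad X).IsSymm)
    (hconv : ∀ X Y : Matrix (Fin n) (Fin n) ℝ, X.IsSymm → Y.IsSymm →
      f X + (grad X * (Y - X)).trace ≤ f Y)
    (hsmooth : ∀ X Y : Matrix (Fin n) (Fin n) ℝ, X.IsSymm → Y.IsSymm →
      frobNorm (grad X - grad Y) ≤ β * frobNorm (X - Y))
    (Xstar : Matrix (Fin n) (Fin n) ℝ)
    (hXstarMem : Xstar ∈ Fantope n k)
    (hXstarOpt : ∀ X ∈ Fantope n k, f Xstar ≤ f X)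
    (δ : ℝ) (hδ : 0 < δ)
    (hgap : δ ≤ eigval (grad Xstar) (n - k) - eigval (grad Xstar) (n - k + 1))
    (Pi : Matrix (Fin n) (Fin n) ℝ → Matrix (Fin n) (Fin n) ℝ)
    (hPi : ∀ W : Matrix (Fin n) (Fin n) ℝ, Pi W ∈ Fantope n k ∧
      ∀ Z ∈ Fantope n k, frobNorm (Pi W - W) ≤ frobNorm (Z - W))
    (η : ℝ) (hη : 0 < η) :
    ∀ X ∈ Fantope n k,
      frobNorm (X - Xstar) ≤ η * δ / (2 * (1 + η * β)) →
      (Pi (X - η • grad X)).rank = k := by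
  classical
  intro X hX hclose
  have hgsym : (grad Xstar).IsHermitian := isHermitian_of_isSymm (hgradSymm Xstar)
  set w : Fin n → ℝ := hgsym.eigenvalues ∘ Tuple.sort hgsym.eigenvalues with hw
  have hwmono : Monotone w := Tuple.monotone_sort hgsym.eigenvalues
  obtain ⟨Vg, hVg, hgeq⟩ := sorted_eigendata hgsym
  have hk1n : k - 1 < n := by omega
  -- eigen-gap in terms of sorted eigenvalues
  have hgap2 : δ ≤ w ⟨k, hkn⟩ - w ⟨k - 1, hk1n⟩ := by
    have e1 : eigval (grad Xstar) (n - k) = w ⟨k, hkn⟩ := by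
      rw [eigval_eq hgsym (n - k) (by omega)]
      show w ⟨n - (n - k), _⟩ = w ⟨k, hkn⟩
      congr 1
      exact Fin.ext (by simp only []; omega)
    have e2 : eigval (grad Xstar) (n - k + 1) = w ⟨k - 1, hk1n⟩ := by
      rw [eigval_eq hgsym (n - k + 1) (by omega)]
      show w ⟨n - (n - k + 1), _⟩ = w ⟨k - 1, hk1n⟩
      congr 1
      exact Fin.ext (by simp only []; omega)
    rw [e1, e2] at hgap
    exact hgap
  -- T0 and its cardinality
  set T0 : Finset (Fin n) := Finset.univ.filter (fun i => (i : ℕ) < k) with hT0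
  have hT0card : T0.card = k := by
    rw [hT0, Finset.card_filter]
    rw [Fin.sum_univ_eq_sum_range (fun i => if i < k then 1 else 0)]
    have : ∀ i ∈ Finset.range n, (if i < k then 1 else 0) = if i ∈ Finset.range k then 1 else 0 := by
      intro i _
      simp [Finset.mem_range]
    rw [Finset.sum_congr rfl this, Finset.sum_ite_mem]
    have : Finset.range n ∩ Finset.range k = Finset.range k := by
      ext a
      simp only [Finset.mem_inter, Finset.mem_range]
      omega
    rw [this]
    simp
  set a0 : ℝ := w ⟨k - 1, hk1n⟩ with ha0
  have hwa : ∀ i ∈ T0, w i ≤ a0 := by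
    intro i hi
    rw [hT0, Finset.mem_filter] at hi
    apply hwmono
    show (i : ℕ) ≤ k - 1
    omega
  have hwb : ∀ i ∉ T0, a0 + δ ≤ w i := by
    intro i hi
    rw [hT0, Finset.mem_filter] at hi
    have hik : k ≤ (i : ℕ) := by
      by_contra hc
      exact hi ⟨Finset.mem_univ i, by omega⟩
    have : w ⟨k, hkn⟩ ≤ w i := hwmono (show (⟨k, hkn⟩ : Fin n) ≤ i from hik)
    rw [ha0]
    linarith
  -- variational inequality and identification of Xstar
  have hVI := optimality_vi f grad β hβ hgradSymm hconv hsmooth hXstarMem hXstarOpt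
  have hVIg : ∀ Z ∈ Fantope n k, 0 ≤ fip (grad Xstar) (Z - Xstar) := hVI
  have hXstar_eq : Xstar = Vg * diagonal (fun i => if i ∈ T0 then (1:ℝ) else 0) * Vgᵀ :=
    xstar_eq hVg w hgeq hVIg hXstarMem T0 hT0card hδ a0 hwa hwb
  -- W and its eigendecomposition
  set W := X - η • grad X with hWdef
  have hWsymm : W.IsSymm := hX.1.sub ((hgradSymm X).smul η)
  have hWherm : W.IsHermitian := isHermitian_of_isSymm hWsymm
  obtain ⟨Vw, hVw, hWeq⟩ := sorted_eigendata hWherm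
  set lam : Fin n → ℝ := hWherm.eigenvalues ∘ Tuple.sort hWherm.eigenvalues with hlam
  -- Wstar
  set mu : Fin n → ℝ := fun i => (if i ∈ T0 then (1:ℝ) else 0) - η * w i with hmu
  have hWstar_eq : Xstar - η • grad Xstar = Vg * diagonal mu * Vgᵀ := by
    have h1 : η • grad Xstar = Vg * diagonal (fun i => η * w i) * Vgᵀ := by
      rw [hgeq, ← Matrix.smul_mul, ← Matrix.mul_smul, ← Matrix.diagonal_smul]
      congr 1
    have h2 : Xstar - η • grad Xstar
        = Vg * diagonal (fun i => if i ∈ T0 then (1:ℝ) else 0) * Vgᵀ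
          - Vg * diagonal (fun i => η * w i) * Vgᵀ := by
      rw [← h1, ← hXstar_eq]
    rw [h2, ← Matrix.sub_mul, ← Matrix.mul_sub, Matrix.diagonal_sub]
  -- the perturbation bound
  set e : ℝ := frobNorm (W - (Xstar - η • grad Xstar)) with he
  have he0 : 0 ≤ e := frobNorm_nonneg _
  have heb : e ≤ η * δ / 2 := by
    have hsplit : W - (Xstar - η • grad Xstar)
        = (X - Xstar) + (-η) • (grad X - grad Xstar) := by
      rw [hWdef]; module
    have htri : e ≤ frobNorm (X - Xstar) + frobNorm ((-η) • (grad X - grad Xstar)) := by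
      rw [he, hsplit]; exact frobNorm_add_le _ _
    have hsm := hsmooth X Xstar hX.1 hXstarMem.1
    have hsm2 : frobNorm ((-η) • (grad X - grad Xstar)) ≤ η * (β * frobNorm (X - Xstar)) := by
      rw [frobNorm_smul, abs_neg, abs_of_pos hη]
      exact mul_le_mul_of_nonneg_left hsm (le_of_lt hη)
    have hcl : frobNorm (X - Xstar) ≤ η * δ / (2 * (1 + η * β)) := hclose
    have hpos : 0 < 1 + η * β := by nlinarith
    have hXn : 0 ≤ frobNorm (X - Xstar) := frobNorm_nonneg _
    have hfinal : (1 + η * β) * frobNorm (X - Xstar) ≤ η * δ / 2 := by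
      have h2 : (1 + η * β) * frobNorm (X - Xstar) ≤ (1 + η * β) * (η * δ / (2 * (1 + η * β))) :=
        mul_le_mul_of_nonneg_left hcl (le_of_lt hpos)
      have h3 : (1 + η * β) * (η * δ / (2 * (1 + η * β))) = η * δ / 2 := by
        field_simp
      linarith
    nlinarith
  -- cluster bounds for mu
  set aW : ℝ := -(η * w ⟨k, hkn⟩) with haW
  set bW : ℝ := 1 - η * w ⟨k - 1, hk1n⟩ with hbW
  have hba : 1 + η * δ ≤ bW - aW := by
    rw [hbW, haW]
    nlinarith
  have hmuT0 : ∀ i ∈ T0, bW ≤ mu i := by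
    intro i hi
    rw [hmu, hbW]
    simp only [hi, if_pos]
    have : w i ≤ w ⟨k - 1, hk1n⟩ := hwa i hi
    nlinarith
  have hmuT0c : ∀ i ∉ T0, mu i ≤ aW := by
    intro i hi
    rw [hmu, haW]
    simp only [hi, if_neg, not_false_iff]
    have h1 : a0 + δ ≤ w i := hwb i hi
    have h2 : w ⟨k, hkn⟩ ≤ w i := by
      rw [hT0, Finset.mem_filter] at hi
      have hik : k ≤ (i : ℕ) := by
        by_contra hc
        exact hi ⟨Finset.mem_univ i, by omega⟩
      exact hwmono (show (⟨k, hkn⟩ : Fin n) ≤ i from hik)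
    nlinarith
  -- localization of lam
  have hloc : ∀ j, lam j ≤ aW + e ∨ bW - e ≤ lam j := by
    intro j
    obtain ⟨i, hi⟩ := eig_localize hVw hVg lam mu j
    rw [← hWeq, ← hWstar_eq, ← he] at hi
    have habs := abs_le.mp hi
    by_cases hiT0 : i ∈ T0
    · right
      have := hmuT0 i hiT0
      linarith [habs.1]
    · left
      have := hmuT0c i hiT0
      linarith [habs.2]
  -- the top cluster of W
  set T : Finset (Fin n) := Finset.univ.filter (fun j => bW - e ≤ lam j) with hT
  have hTmem : ∀ j ∈ T, bW - e ≤ lam j := by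
    intro j hj
    rw [hT, Finset.mem_filter] at hj
    exact hj.2
  have hTnot : ∀ j ∉ T, lam j ≤ aW + e := by
    intro j hj
    rw [hT, Finset.mem_filter] at hj
    rcases hloc j with h | h
    · exact h
    · exact absurd ⟨Finset.mem_univ j, h⟩ hj
  have h2e : 2 * e ≤ η * δ := by linarith
  -- quadratic-form contradiction machinery
  have hEquad : ∀ u : Fin n → ℝ,
      |u ⬝ᵥ ((W - (Xstar - η • grad Xstar)) *ᵥ u)| ≤ e * (u ⬝ᵥ u) := by
    intro u
    rw [he]
    exact abs_quad_E_le _ u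
  have hquad_split : ∀ u : Fin n → ℝ,
      u ⬝ᵥ (W *ᵥ u) - u ⬝ᵥ ((Xstar - η • grad Xstar) *ᵥ u)
        = u ⬝ᵥ ((W - (Xstar - η • grad Xstar)) *ᵥ u) := fun u =>
    (dot_sub_mulVec W (Xstar - η • grad Xstar) u).symm
  -- k ≤ T.card
  have hle1 : T0.card ≤ T.card := by
    apply count_split hVw hVg
    intro u hu0 hkerT hrangeT0
    have hq1 : u ⬝ᵥ (W *ᵥ u) ≤ (aW + e) * (u ⬝ᵥ u) := by
      rw [hWeq]
      exact quadform_upper hVw lam u T hkerT (aW + e) hTnot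
    have hq2 : bW * (u ⬝ᵥ u) ≤ u ⬝ᵥ ((Xstar - η • grad Xstar) *ᵥ u) := by
      rw [hWstar_eq]
      apply quadform_lower hVg mu u T0ᶜ
      · intro i hi
        exact hrangeT0 i (Finset.mem_compl.mp hi)
      · intro i hi
        exact hmuT0 i (by simpa using hi)
    have hq3 := hEquad u
    have hq4 := hquad_split u
    have hupos : 0 < u ⬝ᵥ u := dot_self_pos hu0
    have habs := abs_le.mp hq3
    nlinarith
  -- T.card ≤ k
  have hle2 : T.card ≤ T0.card := by
    apply count_split hVg hVw
    intro u hu0 hkerT0 hrangeT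
    have hq1 : u ⬝ᵥ ((Xstar - η • grad Xstar) *ᵥ u) ≤ aW * (u ⬝ᵥ u) := by
      rw [hWstar_eq]
      exact quadform_upper hVg mu u T0 hkerT0 aW hmuT0c
    have hq2 : (bW - e) * (u ⬝ᵥ u) ≤ u ⬝ᵥ (W *ᵥ u) := by
      rw [hWeq]
      apply quadform_lower hVw lam u Tᶜ
      · intro j hj
        exact hrangeT j (Finset.mem_compl.mp hj)
      · intro j hj
        exact hTmem j (by simpa using hj)
    have hq3 := hEquad u
    have hq4 := hquad_split u
    have hupos : 0 < u ⬝ᵥ u := dot_self_pos hu0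
    have habs := abs_le.mp hq3
    nlinarith
  have hTcard : T.card = k := by omega
  -- the minimizer
  have hQmem : Vw * diagonal (fun j => if j ∈ T then (1:ℝ) else 0) * Vwᵀ ∈ Fantope n k := by
    apply conj_mem_fantope hVw
    · intro i; by_cases h : i ∈ T <;> simp [h]
    · intro i; by_cases h : i ∈ T <;> simp [h]
    · simp only [Finset.sum_ite_mem, Finset.univ_inter, Finset.sum_const, nsmul_eq_mul, mul_one]
      rw [hTcard]
  have hQmin : ∀ Z ∈ Fantope n k,
      frobNorm (Vw * diagonal (fun j => if j ∈ T then (1:ℝ) else 0) * Vwᵀ - W)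
        ≤ frobNorm (Z - W) := by
    intro Z hZ
    have hgap1 : (aW + e) + 1 ≤ bW - e := by linarith
    have := master_min hVw lam T hTcard (aW + e) (bW - e) hTmem hTnot hgap1 hZ
    rwa [← hWeq] at this
  obtain ⟨hYmem, hYmin⟩ := hPi W
  have hYQ : Pi W = Vw * diagonal (fun j => if j ∈ T then (1:ℝ) else 0) * Vwᵀ :=
    proj_unique hQmem hQmin hYmem hYmin
  show (Pi W).rank = k
  rw [hYQ, rank_conj hVw]
  rw [← hTcard]
  congr 1
  ext j
  by_cases h : j ∈ T <;> simp [h]
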